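/- Let n ≥ 1 and ε ≥ 0. Let L and L' be real symmetric positive semidefinite n×n matrices such that (1/(1+ε))·zᵀLz ≤ zᵀL'z ≤ (1+ε)·zᵀLz for all z ∈ ℝⁿ, and let D be any real symmetric n×n matrix. Then ‖D(L'−L)D‖ ≤ ε·‖DLD‖, where ‖·‖ denotes the spectral (operator 2-) norm. -/

import Mathlib

open Matrix
open scoped Matrix.Norms.L2Operator

/-- If symmetric PSD matrices `L, L'` satisfy the ε-approximation sandwich
inequalities and `D` is any real symmetric matrix, then `‖D(L'−L)D‖ ≤ ε‖DLD‖` in the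
spectral (operator 2-) norm. -/
theorem spectral_congruence_norm_bound
    (n : ℕ) (hn : 1 ≤ n) (ε : ℝ) (hε : 0 ≤ ε)
    (L L' D : Matrix (Fin n) (Fin n) ℝ)
    (hL : L.PosSemidef) (hL' : L'.PosSemidef) (hD : D.IsSymm)
    (hsand : ∀ z : Fin n → ℝ,
      (1 / (1 + ε)) * (z ⬝ᵥ L.mulVec z) ≤ z ⬝ᵥ L'.mulVec z ∧
      z ⬝ᵥ L'.mulVec z ≤ (1 + ε) * (z ⬝ᵥ L.mulVec z)) :
    ‖D * (L' - L) * D‖ ≤ ε * ‖D * L * D‖ := by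
  set A := D * (L' - L) * D with hA
  set B := D * L * D with hB
  set C := ε * ‖B‖ with hCdef
  have hCnn : 0 ≤ C := mul_nonneg hε (norm_nonneg _)
  -- congruence identity
  have hcong : ∀ (M : Matrix (Fin n) (Fin n) ℝ) (x : Fin n → ℝ),
      x ⬝ᵥ (D * M * D).mulVec x = (D.mulVec x) ⬝ᵥ M.mulVec (D.mulVec x) := by
    intro M x
    rw [← Matrix.mulVec_mulVec, ← Matrix.mulVec_mulVec, Matrix.dotProduct_mulVec,
      ← Matrix.mulVec_transpose, hD.eq]
  -- dot product vs inner product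
  have hdi : ∀ v w : EuclideanSpace ℝ (Fin n),
      (v : Fin n → ℝ) ⬝ᵥ (w : Fin n → ℝ) = @inner ℝ _ _ v w := by
    intro v w
    simp [dotProduct, PiLp.inner_apply, RCLike.inner_apply, mul_comm]
  have hds : ∀ v : EuclideanSpace ℝ (Fin n), (v : Fin n → ℝ) ⬝ᵥ (v : Fin n → ℝ) = ‖v‖ ^ 2 := by
    intro v
    rw [hdi v v, real_inner_self_eq_norm_sq]
  -- quadratic bound
  have hq : ∀ x : Fin n → ℝ, |x ⬝ᵥ A.mulVec x| ≤ ε * (x ⬝ᵥ B.mulVec x) := by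
    intro x
    have h1 := (hsand (D.mulVec x)).1
    have h2 := (hsand (D.mulVec x)).2
    have hp : 0 ≤ (D.mulVec x) ⬝ᵥ L.mulVec (D.mulVec x) := by
      have := hL.dotProduct_mulVec_nonneg (D.mulVec x); simpa using this
    have hAx : x ⬝ᵥ A.mulVec x =
        (D.mulVec x) ⬝ᵥ L'.mulVec (D.mulVec x) - (D.mulVec x) ⬝ᵥ L.mulVec (D.mulVec x) := by
      rw [hA, hcong, Matrix.sub_mulVec, dotProduct_sub]
    have hBx := hcong L x
    rw [hAx, hB, hBx]
    have hu2 : (1 - ε) ≤ 1 / (1 + ε) := by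
      rw [le_div_iff₀ (by linarith)]; nlinarith
    rw [abs_le]
    constructor
    · nlinarith [mul_le_mul_of_nonneg_right hu2 hp]
    · nlinarith
  -- Cauchy-Schwarz bound on B's quadratic form
  have hq2 : ∀ x : EuclideanSpace ℝ (Fin n),
      |(x : Fin n → ℝ) ⬝ᵥ A.mulVec x| ≤ C * ‖x‖ ^ 2 := by
    intro x
    refine (hq x).trans ?_
    rw [hCdef, mul_assoc]
    refine mul_le_mul_of_nonneg_left ?_ hε
    have hy := B.l2_opNorm_mulVec x
    calc (x : Fin n → ℝ) ⬝ᵥ B.mulVec x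
        = @inner ℝ _ _ x ((EuclideanSpace.equiv (Fin n) ℝ).symm (B.mulVec x)) := hdi x ((EuclideanSpace.equiv (Fin n) ℝ).symm (B.mulVec x))
      _ ≤ ‖x‖ * ‖(EuclideanSpace.equiv (Fin n) ℝ).symm (B.mulVec x)‖ := real_inner_le_norm _ _
      _ ≤ ‖x‖ * (‖B‖ * ‖x‖) := mul_le_mul_of_nonneg_left hy (norm_nonneg _)
      _ = ‖B‖ * ‖x‖ ^ 2 := by ring
  -- symmetry of A
  have hLs : Lᵀ = L := by
    rw [← L.conjTranspose_eq_transpose_of_trivial]; exact hL.1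
  have hL's : L'ᵀ = L' := by
    rw [← L'.conjTranspose_eq_transpose_of_trivial]; exact hL'.1
  have hAsym : A.IsSymm := by
    rw [Matrix.IsSymm, hA, Matrix.transpose_mul, Matrix.transpose_mul, hD.eq,
      Matrix.transpose_sub, hLs, hL's, ← Matrix.mul_assoc]
  have hAbil : ∀ x y : Fin n → ℝ, y ⬝ᵥ A.mulVec x = x ⬝ᵥ A.mulVec y := by
    intro x y
    rw [Matrix.dotProduct_mulVec, ← Matrix.mulVec_transpose, hAsym.eq, dotProduct_comm]
  -- polarization bound
  have hbound : ∀ x y : EuclideanSpace ℝ (Fin n),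
      |(x : Fin n → ℝ) ⬝ᵥ A.mulVec y| ≤ C / 2 * (‖x‖ ^ 2 + ‖y‖ ^ 2) := by
    intro x y
    have hpol : (((x + y : EuclideanSpace ℝ (Fin n)) : Fin n → ℝ)) ⬝ᵥ
          A.mulVec ((x + y : EuclideanSpace ℝ (Fin n)) : Fin n → ℝ)
        - (((x - y : EuclideanSpace ℝ (Fin n)) : Fin n → ℝ)) ⬝ᵥ
          A.mulVec ((x - y : EuclideanSpace ℝ (Fin n)) : Fin n → ℝ)
        = 4 * ((x : Fin n → ℝ) ⬝ᵥ A.mulVec y) := by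
      have hxy : ((x + y : EuclideanSpace ℝ (Fin n)) : Fin n → ℝ)
          = (x : Fin n → ℝ) + (y : Fin n → ℝ) := rfl
      have hxy' : ((x - y : EuclideanSpace ℝ (Fin n)) : Fin n → ℝ)
          = (x : Fin n → ℝ) - (y : Fin n → ℝ) := rfl
      rw [hxy, hxy', Matrix.mulVec_add, Matrix.mulVec_sub, add_dotProduct,
        sub_dotProduct, dotProduct_add, dotProduct_sub,
        dotProduct_add, dotProduct_sub, hAbil x y]
      ring
    have h1 := hq2 (x + y)
    have h2 := hq2 (x - y)
    have hpar := parallelogram_law_with_norm ℝ x y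
    have hpar' : ‖x + y‖ ^ 2 + ‖x - y‖ ^ 2 = 2 * (‖x‖ ^ 2 + ‖y‖ ^ 2) := by
      rw [pow_two, pow_two, pow_two, pow_two]; linarith [hpar]
    have habs : |(4 : ℝ)| * |(x : Fin n → ℝ) ⬝ᵥ A.mulVec y|
        ≤ C * ‖x + y‖ ^ 2 + C * ‖x - y‖ ^ 2 := by
      rw [← abs_mul, ← hpol]
      exact (abs_sub _ _).trans (add_le_add h1 h2)
    have h3 : C * ‖x + y‖ ^ 2 + C * ‖x - y‖ ^ 2 = 4 * (C / 2 * (‖x‖ ^ 2 + ‖y‖ ^ 2)) := by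
      rw [← mul_add, hpar']; ring
    rw [h3] at habs
    have h4 : |(4 : ℝ)| = 4 := by norm_num
    rw [h4] at habs
    linarith
  -- scaling to product form
  have hscaled : ∀ x y : EuclideanSpace ℝ (Fin n),
      |(x : Fin n → ℝ) ⬝ᵥ A.mulVec y| ≤ C * (‖x‖ * ‖y‖) := by
    intro x y
    by_cases hx : x = 0
    · subst hx
      have h0 : ((0 : EuclideanSpace ℝ (Fin n)) : Fin n → ℝ) = 0 := rfl
      rw [h0, zero_dotProduct]
      simpa using mul_nonneg hCnn (mul_nonneg (norm_nonneg _) (norm_nonneg _))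
    by_cases hy : y = 0
    · subst hy
      have h0 : ((0 : EuclideanSpace ℝ (Fin n)) : Fin n → ℝ) = 0 := rfl
      rw [h0, Matrix.mulVec_zero, dotProduct_zero]
      simpa using mul_nonneg hCnn (mul_nonneg (norm_nonneg _) (norm_nonneg _))
    have hxn : 0 < ‖x‖ := norm_pos_iff.mpr hx
    have hyn : 0 < ‖y‖ := norm_pos_iff.mpr hy
    set t : ℝ := Real.sqrt (‖y‖ / ‖x‖) with htdef
    have ht : 0 < t := Real.sqrt_pos.mpr (by positivity)
    have ht2 : t ^ 2 = ‖y‖ / ‖x‖ := Real.sq_sqrt (by positivity)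
    have key := hbound (t • x) (t⁻¹ • y)
    have hrw : ((t • x : EuclideanSpace ℝ (Fin n)) : Fin n → ℝ) ⬝ᵥ
        A.mulVec ((t⁻¹ • y : EuclideanSpace ℝ (Fin n)) : Fin n → ℝ)
        = (x : Fin n → ℝ) ⬝ᵥ A.mulVec y := by
      have h1 : ((t • x : EuclideanSpace ℝ (Fin n)) : Fin n → ℝ) = t • (x : Fin n → ℝ) := rfl
      have h2 : ((t⁻¹ • y : EuclideanSpace ℝ (Fin n)) : Fin n → ℝ) = t⁻¹ • (y : Fin n → ℝ) := rfl
      rw [h1, h2, smul_dotProduct, Matrix.mulVec_smul, dotProduct_smul]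
      rw [smul_smul, mul_inv_cancel₀ ht.ne', one_smul]
    rw [hrw, norm_smul, norm_smul] at key
    simp only [Real.norm_eq_abs, abs_of_pos ht, abs_of_pos (inv_pos.mpr ht)] at key
    refine key.trans (le_of_eq ?_)
    have e1 : t ^ 2 * ‖x‖ ^ 2 = ‖x‖ * ‖y‖ := by
      rw [ht2]; field_simp
    have e2 : t⁻¹ ^ 2 * ‖y‖ ^ 2 = ‖x‖ * ‖y‖ := by
      rw [inv_pow, ht2, inv_div]; field_simp
    have e3 : (t * ‖x‖) ^ 2 + (t⁻¹ * ‖y‖) ^ 2 = ‖x‖ * ‖y‖ + ‖x‖ * ‖y‖ := by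
      have : (t * ‖x‖) ^ 2 + (t⁻¹ * ‖y‖) ^ 2 = t ^ 2 * ‖x‖ ^ 2 + t⁻¹ ^ 2 * ‖y‖ ^ 2 := by ring
      rw [this, e1, e2]
    rw [e3]; ring
  -- conclude
  rw [Matrix.l2_opNorm_def]
  refine ContinuousLinearMap.opNorm_le_bound _ hCnn ?_
  intro x
  set w : EuclideanSpace ℝ (Fin n) := (EuclideanSpace.equiv (Fin n) ℝ).symm (A.mulVec x) with hw
  have hx := hscaled w x
  have hww : (w : Fin n → ℝ) = A.mulVec x := rfl
  have hsq : ‖w‖ ^ 2 = (w : Fin n → ℝ) ⬝ᵥ A.mulVec x := by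
    rw [← hds w, ← hww]
  have h5 : ‖w‖ ^ 2 ≤ C * (‖w‖ * ‖x‖) := by
    rw [hsq]; exact (le_abs_self _).trans hx
  have h6 : ‖w‖ ≤ C * ‖x‖ := by
    rcases eq_or_lt_of_le (norm_nonneg w) with h | h
    · rw [← h]; positivity
    · nlinarith
  exact h6
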